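/- Let X = ℙ¹ × ℙ¹ over a field k with coordinates t, u, let C₁, C₂ be the coordinate lines meeting transversally at the point p given by t = u = 0. With K_{p,C₁} = k((t))((u)), K_{p,C₂} = k((u))((t)), B_{C₁} = k[t⁻¹]((u)), B_{C₂} = k[u⁻¹]((t)), and B_p = ⋃_{m,n} u^{-m} t^{-n} k[[u,t]] embedded diagonally, the quotient (K_{p,C₁} ⊕ K_{p,C₂}) / (B_{C₁} ⊕ B_{C₂} + B_p) is isomorphic to k[[u,t]]·ut, equivalently k((u))((t)) / (k[u⁻¹]((t)) + k((u))[t⁻¹]) ≅ u t k[[u,t]]. -/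

import Mathlib

/-!
STATEMENT 19: For `X = ℙ¹ × ℙ¹` with coordinate lines `C₁ : u = 0`, `C₂ : t = 0`
meeting at `p = (0,0)`, the adelic quotient at `p` reduces (in the single
two-dimensional local field `K_{p,C₂} = k((u))((t))`) to
  `k((u))((t)) / ( k[u⁻¹]((t)) + k((u))[t⁻¹] ) ≅ u·t·k[[u,t]]`
as abelian groups (equivalently `k`-vector spaces).
Here `LaurentSeries (LaurentSeries k)` is `k((u))((t))` (inner variable `u`,
outer variable `t`), `k[u⁻¹]((t))` is the subgroup whose inner coefficients have
no positive powers of `u`, `k((u))[t⁻¹]` is the subgroup with no positive powers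
of `t`, and `u t k[[u,t]]` is the subgroup supported in `u`-degrees ≥ 1 and
`t`-degrees ≥ 1.
-/

variable (k : Type*) [Field k]

/-- `k[u⁻¹]((t)) ⊆ k((u))((t))`. -/
def polesInU : AddSubgroup (LaurentSeries (LaurentSeries k)) where
  carrier := {f | ∀ n m : ℤ, 0 < m → (f.coeff n).coeff m = 0}
  zero_mem' := by intro n m _; simp
  add_mem' := by
    intro f g hf hg n m hm
    simp [HahnSeries.coeff_add, hf n m hm, hg n m hm]
  neg_mem' := by
    intro f hf n m hm
    simp [HahnSeries.coeff_neg, hf n m hm]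

/-- `k((u))[t⁻¹] ⊆ k((u))((t))`. -/
def polesInT : AddSubgroup (LaurentSeries (LaurentSeries k)) where
  carrier := {f | ∀ n : ℤ, 0 < n → f.coeff n = 0}
  zero_mem' := by intro n _; simp
  add_mem' := by
    intro f g hf hg n hn
    simp [HahnSeries.coeff_add, hf n hn, hg n hn]
  neg_mem' := by
    intro f hf n hn
    simp [HahnSeries.coeff_neg, hf n hn]

/-- `u·t·k[[u,t]] ⊆ k((u))((t))`: series supported in `t`-degrees `≥ 1` whose
coefficients are supported in `u`-degrees `≥ 1`. -/
def utPowerSeries : AddSubgroup (LaurentSeries (LaurentSeries k)) where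
  carrier := {f | ∀ n m : ℤ, (n ≤ 0 ∨ m ≤ 0) → (f.coeff n).coeff m = 0}
  zero_mem' := by intro n m _; simp
  add_mem' := by
    intro f g hf hg n m h
    simp [HahnSeries.coeff_add, hf n m h, hg n m h]
  neg_mem' := by
    intro f hf n m h
    simp [HahnSeries.coeff_neg, hf n m h]

/-- Truncation of a `ℤ`-indexed Hahn series to positive degrees. -/
def posTrunc {R : Type*} [AddCommGroup R] (f : HahnSeries ℤ R) : HahnSeries ℤ R where
  coeff := fun m => if 0 < m then f.coeff m else 0
  isPWO_support' := f.isPWO_support.mono (by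
    intro m hm
    simp only [Function.mem_support] at hm ⊢
    intro h
    apply hm
    split <;> simp [h])

@[simp] lemma posTrunc_coeff {R : Type*} [AddCommGroup R] (f : HahnSeries ℤ R) (m : ℤ) :
    (posTrunc f).coeff m = if 0 < m then f.coeff m else 0 := rfl

/-- Truncation of a `ℤ`-indexed Hahn series to nonpositive degrees. -/
def negTrunc {R : Type*} [AddCommGroup R] (f : HahnSeries ℤ R) : HahnSeries ℤ R where
  coeff := fun m => if 0 < m then 0 else f.coeff m
  isPWO_support' := f.isPWO_support.mono (by
    intro m hm
    simp only [Function.mem_support] at hm ⊢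
    intro h
    apply hm
    split <;> simp [h])

@[simp] lemma negTrunc_coeff {R : Type*} [AddCommGroup R] (f : HahnSeries ℤ R) (m : ℤ) :
    (negTrunc f).coeff m = if 0 < m then 0 else f.coeff m := rfl

/-- The double truncation map `k((u))((t)) → k((u))((t))` keeping only terms with
positive `t`-degree and positive `u`-degree. -/
def doubleTrunc : LaurentSeries (LaurentSeries k) →+ LaurentSeries (LaurentSeries k) where
  toFun f :=
    { coeff := fun n => if 0 < n then posTrunc (f.coeff n) else 0
      isPWO_support' := f.isPWO_support.mono (by
        intro n hn
        simp only [Function.mem_support] at hn ⊢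
        intro h
        apply hn
        split <;> simp [h, posTrunc]
        rfl) }
  map_zero' := by
    ext n m
    simp only [HahnSeries.coeff_zero]
    split <;> simp
  map_add' f g := by
    ext n m
    simp only [HahnSeries.coeff_add]
    split
    · simp only [posTrunc_coeff, HahnSeries.coeff_add]
      split <;> simp
    · simp

@[simp] lemma doubleTrunc_coeff (f : LaurentSeries (LaurentSeries k)) (n m : ℤ) :
    ((doubleTrunc k f).coeff n).coeff m =
      if 0 < n ∧ 0 < m then (f.coeff n).coeff m else 0 := by
  show ((if 0 < n then posTrunc (f.coeff n) else 0) : LaurentSeries k).coeff m = _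
  by_cases hn : 0 < n <;> by_cases hm : 0 < m <;> simp [hn, hm]

/-- The quotient `k((u))((t)) / ( k[u⁻¹]((t)) + k((u))[t⁻¹] )` is isomorphic to
`u·t·k[[u,t]]`: there is an additive endomorphism of `k((u))((t))` with image
`u·t·k[[u,t]]` and kernel exactly `k[u⁻¹]((t)) + k((u))[t⁻¹]` (so the first
isomorphism theorem yields the isomorphism of the statement). -/
theorem laurent_quotient_iso_utPowerSeries :
    ∃ φ : LaurentSeries (LaurentSeries k) →+ LaurentSeries (LaurentSeries k),
      Set.range ⇑φ = (utPowerSeries k : Set (LaurentSeries (LaurentSeries k))) ∧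
      ⇑φ ⁻¹' {0} = ((polesInU k ⊔ polesInT k : AddSubgroup (LaurentSeries (LaurentSeries k))) :
        Set (LaurentSeries (LaurentSeries k))) := by
  refine ⟨doubleTrunc k, ?_, ?_⟩
  · ext g
    constructor
    · rintro ⟨f, rfl⟩ n m h
      rw [doubleTrunc_coeff, if_neg]
      rintro ⟨hn, hm⟩
      rcases h with h | h
      · exact absurd hn (not_lt.2 h)
      · exact absurd hm (not_lt.2 h)
    · intro hg
      refine ⟨g, ?_⟩
      ext n m
      rw [doubleTrunc_coeff]
      split_ifs with h
      · rfl
      · refine (hg n m ?_).symm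
        by_contra h'
        push_neg at h'
        exact h ⟨h'.1, h'.2⟩
  · ext f
    simp only [Set.mem_preimage, Set.mem_singleton_iff, SetLike.mem_coe]
    constructor
    · intro hf
      have key : ∀ n m : ℤ, 0 < n → 0 < m → (f.coeff n).coeff m = 0 := by
        intro n m hn hm
        have := congrArg (fun g => (HahnSeries.coeff (HahnSeries.coeff g n) m)) hf
        simpa [doubleTrunc_coeff, hn, hm] using this
      have hdecomp : f = posTrunc f + negTrunc f := by
        ext n
        rw [HahnSeries.coeff_add, posTrunc_coeff, negTrunc_coeff]
        split_ifs <;> simp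
      rw [hdecomp]
      refine AddSubgroup.add_mem_sup ?_ ?_
      · intro n m hm
        rw [posTrunc_coeff]
        split_ifs with hn
        · exact key n m hn hm
        · simp
      · intro n hn
        rw [negTrunc_coeff, if_pos hn]
    · intro hf
      have hsup : polesInU k ⊔ polesInT k ≤ (doubleTrunc k).ker := by
        refine sup_le ?_ ?_
        · intro a ha
          rw [AddMonoidHom.mem_ker]
          ext n m
          simp only [HahnSeries.coeff_zero]
          rw [doubleTrunc_coeff]
          split_ifs with h
          · exact ha n m h.2
          · rfl
        · intro a ha
          rw [AddMonoidHom.mem_ker]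
          ext n m
          simp only [HahnSeries.coeff_zero]
          rw [doubleTrunc_coeff]
          split_ifs with h
          · rw [ha n h.1]
            simp
          · rfl
      exact hsup hf
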